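/- Let q ≥ 1, n ≥ 1, and let Z̃₁,…,Z̃ₙ be independent random variables with values in [0,1] such that for each i, E[Z̃ᵢ] ≥ 1/(2q) and Var[Z̃ᵢ] ≤ 1/n. Then the product X = ∏ᵢ Z̃ᵢ satisfies Var[X]/(E[X])² ≤ (1 + 4q²/n)ⁿ − 1 ≤ e^{4q²} − 1. -/

import Mathlib

open MeasureTheory ProbabilityTheory

lemma aux_integrable {Ω : Type*} [MeasureSpace Ω] [IsProbabilityMeasure (ℙ : Measure Ω)]
    {f : Ω → ℝ} (hm : Measurable f) (hb : ∀ ω, 0 ≤ f ω ∧ f ω ≤ 1) :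
    Integrable f ℙ := by
  refine (integrable_const (1 : ℝ)).mono' hm.aestronglyMeasurable ?_
  filter_upwards with ω
  rw [Real.norm_eq_abs, abs_of_nonneg (hb ω).1]
  exact (hb ω).2

lemma aux_prod_integral {Ω : Type*} [MeasureSpace Ω] [IsProbabilityMeasure (ℙ : Measure Ω)]
    {ι : Type*} {f : ι → Ω → ℝ} (hmeas : ∀ i, Measurable (f i))
    (hindep : iIndepFun f ℙ)
    (hb : ∀ i ω, 0 ≤ f i ω ∧ f i ω ≤ 1) (s : Finset ι) :
    ∫ ω, ∏ i ∈ s, f i ω = ∏ i ∈ s, ∫ ω, f i ω := by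
  classical
  induction s using Finset.induction with
  | empty => simp
  | insert a s hi ih =>
    have hps : ∀ ω, 0 ≤ ∏ i ∈ s, f i ω ∧ ∏ i ∈ s, f i ω ≤ 1 := by
      intro ω
      constructor
      · exact Finset.prod_nonneg fun i _ => (hb i ω).1
      · exact Finset.prod_le_one (fun i _ => (hb i ω).1) (fun i _ => (hb i ω).2)
    have hmp : Measurable fun ω => ∏ i ∈ s, f i ω := by
      exact Finset.measurable_prod s fun i _ => hmeas i
    have hip : Integrable (fun ω => ∏ i ∈ s, f i ω) ℙ := aux_integrable hmp hps
    have hia : Integrable (f a) ℙ := aux_integrable (hmeas a) (hb a)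
    have hind : IndepFun (f a) (fun ω => ∏ i ∈ s, f i ω) ℙ := by
      have h := (hindep.indepFun_finsetProd_of_notMem hmeas hi).symm
      have he : (∏ j ∈ s, f j) = fun ω => ∏ i ∈ s, f i ω := by
        funext ω; simp [Finset.prod_apply]
      rwa [he] at h
    simp only [Finset.prod_insert hi]
    rw [show (∫ ω, f a ω * ∏ i ∈ s, f i ω) = ∫ ω, (f a * fun ω => ∏ i ∈ s, f i ω) ω from rfl,
      hind.integral_mul_eq_mul_integral hia.aestronglyMeasurable hip.aestronglyMeasurable, ih]

/-- for q ≥ 1, n ≥ 1 and independent [0,1]-valued random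
variables Z̃₁,…,Z̃ₙ with E[Z̃ᵢ] ≥ 1/(2q) and Var[Z̃ᵢ] ≤ 1/n, the product
X = ∏ᵢ Z̃ᵢ satisfies Var[X]/E[X]² ≤ (1 + 4q²/n)ⁿ − 1 ≤ e^{4q²} − 1. -/
theorem stmt_19 {Ω : Type*} [MeasureSpace Ω] [IsProbabilityMeasure (ℙ : Measure Ω)]
    (q : ℝ) (hq : 1 ≤ q) (n : ℕ) (hn : 1 ≤ n)
    (Z : Fin n → Ω → ℝ) (hmeas : ∀ i, Measurable (Z i))
    (hindep : iIndepFun Z ℙ)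
    (hrange : ∀ i ω, 0 ≤ Z i ω ∧ Z i ω ≤ 1)
    (hmean : ∀ i, 1 / (2 * q) ≤ ∫ ω, Z i ω)
    (hvar : ∀ i, variance (Z i) ℙ ≤ 1 / n) :
    variance (fun ω => ∏ i, Z i ω) ℙ / (∫ ω, ∏ i, Z i ω) ^ 2 ≤
      (1 + 4 * q ^ 2 / n) ^ n - 1 ∧
    ((1 + 4 * q ^ 2 / n) ^ n - 1 : ℝ) ≤ Real.exp (4 * q ^ 2) - 1 := by
  have hq0 : (0:ℝ) < q := lt_of_lt_of_le one_pos hq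
  have hn0 : (0:ℝ) < n := by exact_mod_cast hn
  -- squares
  set W : Fin n → Ω → ℝ := fun i ω => Z i ω * Z i ω with hW
  have hWmeas : ∀ i, Measurable (W i) := fun i => (hmeas i).mul (hmeas i)
  have hWrange : ∀ i ω, 0 ≤ W i ω ∧ W i ω ≤ 1 := by
    intro i ω
    refine ⟨mul_nonneg (hrange i ω).1 (hrange i ω).1, ?_⟩
    calc Z i ω * Z i ω ≤ 1 * 1 :=
          mul_le_mul (hrange i ω).2 (hrange i ω).2 (hrange i ω).1 zero_le_one
      _ = 1 := by ring
  have hWindep : iIndepFun W ℙ := by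
    exact hindep.comp (fun _ x => x * x) fun _ => measurable_id.mul measurable_id
  -- product integrals
  have hEX : (∫ ω, ∏ i, Z i ω) = ∏ i, ∫ ω, Z i ω :=
    aux_prod_integral hmeas hindep hrange Finset.univ
  have hEX2 : (∫ ω, ∏ i, W i ω) = ∏ i, ∫ ω, W i ω :=
    aux_prod_integral hWmeas hWindep hWrange Finset.univ
  set μ : Fin n → ℝ := fun i => ∫ ω : Ω, Z i ω with hμ
  set s : Fin n → ℝ := fun i => ∫ ω : Ω, W i ω with hs
  have hμpos : ∀ i, 0 < μ i := fun i =>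
    lt_of_lt_of_le (by positivity) (hmean i)
  have hprodpos : 0 < ∏ i, μ i := Finset.prod_pos fun i _ => hμpos i
  -- Memℒp 2 facts
  have hmem : ∀ (f : Ω → ℝ), Measurable f → (∀ ω, 0 ≤ f ω ∧ f ω ≤ 1) → MemLp f 2 ℙ := by
    intro f hm hb
    refine MemLp.of_bound hm.aestronglyMeasurable 1 ?_
    filter_upwards with ω
    rw [Real.norm_eq_abs, abs_of_nonneg (hb ω).1]
    exact (hb ω).2
  have hXrange : ∀ ω, 0 ≤ ∏ i, Z i ω ∧ ∏ i, Z i ω ≤ 1 := by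
    intro ω
    exact ⟨Finset.prod_nonneg fun i _ => (hrange i ω).1,
      Finset.prod_le_one (fun i _ => (hrange i ω).1) (fun i _ => (hrange i ω).2)⟩
  have hXmeas : Measurable fun ω => ∏ i, Z i ω :=
    Finset.measurable_prod _ fun i _ => hmeas i
  have hvarX : variance (fun ω => ∏ i, Z i ω) ℙ
      = (∏ i, s i) - (∏ i, μ i) ^ 2 := by
    rw [variance_eq_sub (hmem _ hXmeas hXrange), ← hEX]
    congr 1
    rw [← hEX2]
    congr 1
    funext ω
    simp [hW, pow_two, Finset.prod_mul_distrib]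
  have hvari : ∀ i, variance (Z i) ℙ = s i - (μ i)^2 := by
    intro i
    rw [variance_eq_sub (hmem _ (hmeas i) (hrange i))]
    have h : (∫ x, (Z i ^ 2) x) = s i :=
      integral_congr_ae (Filter.Eventually.of_forall fun x => by simp [sq, hW])
    rw [h]
  -- key bound: s i ≤ μ i ^ 2 * (1 + 4 q^2 / n)
  have hkey : ∀ i, s i ≤ (μ i)^2 * (1 + 4 * q^2 / n) := by
    intro i
    have h1 : s i = (μ i)^2 + variance (Z i) ℙ := by rw [hvari i]; ring
    have h2 : variance (Z i) ℙ ≤ 1 / n := hvar i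
    have h3 : 1 / (2*q) ≤ μ i := hmean i
    have h4 : 1 / (4 * q^2) ≤ (μ i)^2 := by
      have := pow_le_pow_left₀ (by positivity) h3 2
      calc 1 / (4 * q^2) = (1/(2*q))^2 := by field_simp; ring
        _ ≤ (μ i)^2 := this
    rw [h1]
    have h5 : (1/(4*q^2)) * (4*q^2/n) ≤ (μ i)^2 * (4*q^2/n) :=
      mul_le_mul_of_nonneg_right h4 (by positivity)
    have h6 : (1/(4*q^2)) * (4*q^2/(n:ℝ)) = 1/n := by field_simp
    nlinarith [sq_nonneg (μ i)]
  have hsnn : ∀ i, 0 ≤ s i := fun i =>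
    integral_nonneg fun ω => (hWrange i ω).1
  have hfac : (0:ℝ) ≤ 1 + 4 * q^2 / n := by positivity
  -- main inequality
  have hmain : (∏ i, s i) ≤ (∏ i, μ i)^2 * (1 + 4*q^2/n)^n := by
    calc (∏ i, s i) ≤ ∏ i, ((μ i)^2 * (1 + 4*q^2/n)) :=
          Finset.prod_le_prod (fun i _ => hsnn i) (fun i _ => hkey i)
      _ = (∏ i, (μ i)^2) * (1 + 4*q^2/n)^n := by
          rw [Finset.prod_mul_distrib, Finset.prod_const, Finset.card_univ,
            Fintype.card_fin]
      _ = (∏ i, μ i)^2 * (1 + 4*q^2/n)^n := by rw [Finset.prod_pow]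
  constructor
  · rw [hEX, hvarX, div_le_iff₀ (by positivity)]
    nlinarith [hmain]
  · have h1 : (1 + 4*q^2/n) ≤ Real.exp (4*q^2/n) := by
      have := Real.add_one_le_exp (4*q^2/n)
      linarith
    have h2 : (1 + 4*q^2/n)^n ≤ (Real.exp (4*q^2/n))^n :=
      pow_le_pow_left₀ hfac h1 n
    have h3 : (Real.exp (4*q^2/n))^n = Real.exp (4*q^2) := by
      rw [← Real.exp_nat_mul]
      congr 1
      field_simp
    linarith [h2, h3.le, h3.ge]
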